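/- Fix E > 0. Let {A_i} be a sequence of positive trace-class operators with Tr(A_i H₀) ≤ E for all i, converging in the Hilbert–Schmidt norm to a positive trace-class operator Ā with Tr(Ā H₀) ≤ E, and let C be a bounded operator. If Tr(A_i C) = c for every i, then Tr(Ā C) = c. (In contrast to the unbounded-operator case, for a bounded operator C the trace constraint is preserved exactly in the limit.) -/

import Mathlib

open Filter MeasureTheory
open scoped ENNReal InnerProductSpace ComplexOrder

variable {H : Type*} [NormedAddCommGroup H] [InnerProductSpace ℂ H] [CompleteSpace H]

/-- The (squared) Hilbert–Schmidt norm of an operator, computed via the matrix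
elements in the orthonormal Hilbert basis `e`, valued in `[0,∞]`. -/
noncomputable def hsNormSq (e : HilbertBasis ℕ ℂ H) (A : H →L[ℂ] H) : ℝ≥0∞ :=
  ∑' p : ℕ × ℕ, (‖⟪e p.1, A (e p.2)⟫_ℂ‖₊ : ℝ≥0∞) ^ 2

/-- `A i → Ā` in the Hilbert–Schmidt norm. -/
def HSTendsto (e : HilbertBasis ℕ ℂ H) (A : ℕ → H →L[ℂ] H) (Abar : H →L[ℂ] H) : Prop :=
  Tendsto (fun i => hsNormSq e (A i - Abar)) atTop (nhds 0)

/-- An operator is Hilbert–Schmidt if its Hilbert–Schmidt norm is finite. -/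
def IsHilbertSchmidt (e : HilbertBasis ℕ ℂ H) (A : H →L[ℂ] H) : Prop :=
  hsNormSq e A < ⊤

/-- An operator is trace-class iff it is a product of two Hilbert–Schmidt operators. -/
def IsTraceClass (e : HilbertBasis ℕ ℂ H) (T : H →L[ℂ] H) : Prop :=
  ∃ B C : H →L[ℂ] H, IsHilbertSchmidt e B ∧ IsHilbertSchmidt e C ∧ T = B ∘L C

/-- The (complex) trace of a trace-class operator: `Σ_n ⟪e n, T (e n)⟫`. -/
noncomputable def traceC (e : HilbertBasis ℕ ℂ H) (T : H →L[ℂ] H) : ℂ :=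
  ∑' n : ℕ, ⟪e n, T (e n)⟫_ℂ

/-- `Tr(A H₀)` for the positive diagonal operator `H₀` with `H₀ e_n = E_n e_n`:
the sum `Σ_n E_n ⟪e n, A (e n)⟫`, valued in `[0,∞]`. -/
noncomputable def energyTrace (e : HilbertBasis ℕ ℂ H) (En : ℕ → ℝ) (A : H →L[ℂ] H) : ℝ≥0∞ :=
  ∑' n : ℕ, ENNReal.ofReal (En n * RCLike.re ⟪e n, A (e n)⟫_ℂ)

set_option linter.unusedSectionVars false

lemma aux_rpow2 (x : ℝ≥0∞) : x ^ (2:ℝ) = x ^ 2 := by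
  rw [show (2:ℝ)=((2:ℕ):ℝ) by norm_num, ENNReal.rpow_natCast]

lemma aux_cs (f g : ℕ → ℝ≥0∞) :
    ∑' n, f n * g n ≤ (∑' n, (f n)^2)^((1:ℝ)/2) * (∑' n, (g n)^2)^((1:ℝ)/2) := by
  have hpq : Real.HolderConjugate 2 2 := by constructor <;> norm_num
  calc ∑' n, f n * g n = ∫⁻ n, f n * g n ∂Measure.count := (lintegral_count _).symm
    _ ≤ (∫⁻ n, f n ^ (2:ℝ) ∂Measure.count)^((1:ℝ)/2) * (∫⁻ n, g n ^ (2:ℝ) ∂Measure.count)^((1:ℝ)/2) :=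
        ENNReal.lintegral_mul_le_Lp_mul_Lq _ hpq (Measurable.aemeasurable (by measurability))
          (Measurable.aemeasurable (by measurability))
    _ = (∑' n, (f n)^2)^((1:ℝ)/2) * (∑' n, (g n)^2)^((1:ℝ)/2) := by
        rw [lintegral_count, lintegral_count]
        congr 2 <;> exact tsum_congr fun n => aux_rpow2 _

lemma aux_ofReal_sq (a : ℝ) (ha : 0 ≤ a) : ENNReal.ofReal (a^2) = (ENNReal.ofReal a)^2 := by
  rw [sq, sq, ENNReal.ofReal_mul ha]


lemma aux_sqrt_ofReal_sq (a : ℝ) (ha : 0 ≤ a) :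
    (ENNReal.ofReal (a^2))^((1:ℝ)/2) = ENNReal.ofReal a := by
  rw [aux_ofReal_sq a ha, ← aux_rpow2, ← ENNReal.rpow_mul,
    show (2:ℝ)*(1/2) = 1 by norm_num, ENNReal.rpow_one]


lemma aux_ofReal_norm_sq (x : H) : ENNReal.ofReal (‖x‖^2) = ((‖x‖₊:ℝ≥0∞))^2 := by
  rw [sq, sq, ENNReal.ofReal_mul (norm_nonneg _), ofReal_norm, enorm_eq_nnnorm]

lemma aux_parseval_real (e : HilbertBasis ℕ ℂ H) (x : H) :
    HasSum (fun m => ‖⟪e m, x⟫_ℂ‖^2) (‖x‖^2) := by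
  have h := e.hasSum_inner_mul_inner x x
  have h2 : HasSum (fun m => ((‖⟪e m, x⟫_ℂ‖^2 : ℝ) : ℂ)) ((‖x‖^2 : ℝ):ℂ) := by
    have e1 : (fun m => ((‖⟪e m, x⟫_ℂ‖^2:ℝ):ℂ)) = fun m => ⟪x, e m⟫_ℂ * ⟪e m, x⟫_ℂ := by
      funext m
      rw [← inner_conj_symm x (e m), Complex.conj_mul']
      norm_cast
    have e2 : ((‖x‖^2:ℝ):ℂ) = ⟪x, x⟫_ℂ := by
      rw [inner_self_eq_norm_sq_to_K]; norm_cast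
    rw [e1, e2]; exact h
  exact Complex.hasSum_ofReal.mp h2

lemma aux_parseval (e : HilbertBasis ℕ ℂ H) (x : H) :
    ∑' m, (‖⟪e m, x⟫_ℂ‖₊ : ℝ≥0∞)^2 = ((‖x‖₊:ℝ≥0∞))^2 := by
  have h := aux_parseval_real e x
  have h2 := ENNReal.ofReal_tsum_of_nonneg (fun n => sq_nonneg _) h.summable
  rw [h.tsum_eq] at h2
  calc ∑' m, (‖⟪e m, x⟫_ℂ‖₊ : ℝ≥0∞)^2 = ∑' m, ENNReal.ofReal (‖⟪e m, x⟫_ℂ‖^2) :=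
        tsum_congr fun m => by rw [aux_ofReal_sq _ (norm_nonneg _), ofReal_norm, enorm_eq_nnnorm]
    _ = ENNReal.ofReal (‖x‖^2) := h2.symm
    _ = (‖x‖₊:ℝ≥0∞)^2 := aux_ofReal_norm_sq x

lemma aux_nnnorm_inner_symm (x y : H) : ‖⟪x, y⟫_ℂ‖₊ = ‖⟪y, x⟫_ℂ‖₊ :=
  NNReal.coe_injective (by simpa using norm_inner_symm (𝕜 := ℂ) x y)

lemma aux_sa_move {S : H →L[ℂ] H} (hS : IsSelfAdjoint S) (x y : H) :
    ⟪x, S y⟫_ℂ = ⟪S x, y⟫_ℂ := by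
  have h : ContinuousLinearMap.adjoint S = S := ContinuousLinearMap.isSelfAdjoint_iff'.mp hS
  conv_lhs => rw [← h]
  rw [ContinuousLinearMap.adjoint_inner_right]

lemma aux_inner_sq {S : H →L[ℂ] H} (hS : IsSelfAdjoint S) (x y : H) :
    ⟪x, (S ∘L S) y⟫_ℂ = ⟪S x, S y⟫_ℂ := by
  rw [ContinuousLinearMap.comp_apply, aux_sa_move hS]

lemma aux_diag_sq {S : H →L[ℂ] H} (hS : IsSelfAdjoint S) (x : H) :
    ⟪x, (S ∘L S) x⟫_ℂ = ((‖S x‖^2 : ℝ) : ℂ) := by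
  rw [aux_inner_sq hS, inner_self_eq_norm_sq_to_K]; norm_cast

/-- diagonal entry of `T`, as an extended nonneg real. -/
noncomputable def opDiag (e : HilbertBasis ℕ ℂ H) (T : H →L[ℂ] H) (n : ℕ) : ℝ≥0∞ :=
  (‖⟪e n, T (e n)⟫_ℂ‖₊ : ℝ≥0∞)

lemma aux_opDiag_sq (e : HilbertBasis ℕ ℂ H) {S : H →L[ℂ] H} (hS : IsSelfAdjoint S) (n : ℕ) :
    opDiag e (S ∘L S) n = ((‖S (e n)‖₊:ℝ≥0∞))^2 := by
  rw [opDiag, aux_diag_sq hS]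
  rw [← enorm_eq_nnnorm, ← ofReal_norm, ← aux_ofReal_norm_sq]
  congr 1
  simp [Complex.norm_real]

lemma aux_opDiag_re (e : HilbertBasis ℕ ℂ H) {S : H →L[ℂ] H} (hS : IsSelfAdjoint S) (n : ℕ) :
    ENNReal.ofReal (RCLike.re ⟪e n, (S ∘L S) (e n)⟫_ℂ) = opDiag e (S ∘L S) n := by
  rw [aux_opDiag_sq e hS, aux_diag_sq hS]
  rw [← aux_ofReal_norm_sq]
  norm_cast

lemma aux_re_diag_nonneg {S : H →L[ℂ] H} (hS : IsSelfAdjoint S) (x : H) :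
    0 ≤ RCLike.re ⟪x, (S ∘L S) x⟫_ℂ := by
  rw [aux_diag_sq hS]
  have : RCLike.re ((‖S x‖^2 : ℝ) : ℂ) = ‖S x‖^2 := by norm_cast
  rw [this]
  positivity

lemma aux_sqrt_exists {T : H →L[ℂ] H} (hT : T.IsPositive) :
    ∃ S : H →L[ℂ] H, IsSelfAdjoint S ∧ T = S ∘L S := by
  have h0 : (0:H→L[ℂ]H) ≤ T := (ContinuousLinearMap.nonneg_iff_isPositive T).mpr hT
  refine ⟨CFC.sqrt T, IsSelfAdjoint.of_nonneg (CFC.sqrt_nonneg T), ?_⟩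
  have h := CFC.sq_sqrt T h0
  rw [pow_two] at h
  exact h.symm

lemma aux_SC_sum (e : HilbertBasis ℕ ℂ H) {S : H →L[ℂ] H} (hS : IsSelfAdjoint S)
    (C : H →L[ℂ] H) :
    ∑' n : ℕ, ((‖S (C (e n))‖₊:ℝ≥0∞))^2 ≤ (‖C‖₊:ℝ≥0∞)^2 * ∑' m, ((‖S (e m)‖₊:ℝ≥0∞))^2 := by
  have key : ∀ m n, (‖⟪e m, S (C (e n))⟫_ℂ‖₊:ℝ≥0∞) =
      ‖⟪e n, (ContinuousLinearMap.adjoint C) (S (e m))⟫_ℂ‖₊ := by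
    intro m n
    rw [aux_sa_move hS, ← ContinuousLinearMap.adjoint_inner_left, aux_nnnorm_inner_symm]
  calc ∑' n : ℕ, ((‖S (C (e n))‖₊:ℝ≥0∞))^2
      = ∑' n, ∑' m, (‖⟪e m, S (C (e n))⟫_ℂ‖₊:ℝ≥0∞)^2 :=
        tsum_congr fun n => (aux_parseval e _).symm
    _ = ∑' m, ∑' n, (‖⟪e m, S (C (e n))⟫_ℂ‖₊:ℝ≥0∞)^2 := ENNReal.tsum_comm
    _ = ∑' m, ∑' n, (‖⟪e n, (ContinuousLinearMap.adjoint C) (S (e m))⟫_ℂ‖₊:ℝ≥0∞)^2 := by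
        refine tsum_congr fun m => tsum_congr fun n => ?_
        rw [key]
    _ = ∑' m, ((‖(ContinuousLinearMap.adjoint C) (S (e m))‖₊:ℝ≥0∞))^2 :=
        tsum_congr fun m => aux_parseval e _
    _ ≤ ∑' m, ((‖C‖₊:ℝ≥0∞) * (‖S (e m)‖₊:ℝ≥0∞))^2 := by
        refine ENNReal.tsum_le_tsum fun m => ?_
        refine pow_le_pow_left' ?_ 2
        have h1 : ‖(ContinuousLinearMap.adjoint C) (S (e m))‖ ≤ ‖C‖ * ‖S (e m)‖ := by
          calc ‖(ContinuousLinearMap.adjoint C) (S (e m))‖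
              ≤ ‖ContinuousLinearMap.adjoint C‖ * ‖S (e m)‖ :=
                ContinuousLinearMap.le_opNorm _ _
            _ = ‖C‖ * ‖S (e m)‖ := by
                rw [ContinuousLinearMap.adjoint.norm_map C]
        have h2 : ‖(ContinuousLinearMap.adjoint C) (S (e m))‖₊ ≤ ‖C‖₊ * ‖S (e m)‖₊ := by
          exact_mod_cast h1
        exact_mod_cast h2
    _ = (‖C‖₊:ℝ≥0∞)^2 * ∑' m, ((‖S (e m)‖₊:ℝ≥0∞))^2 := by
        rw [← ENNReal.tsum_mul_left]
        exact tsum_congr fun m => by rw [mul_pow]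

lemma aux_tail_main (e : HilbertBasis ℕ ℂ H) {S : H →L[ℂ] H} (hS : IsSelfAdjoint S)
    (C : H →L[ℂ] H) (N : ℕ) :
    ∑' n : ℕ, (‖⟪e (n+N), (S ∘L S) (C (e (n+N)))⟫_ℂ‖₊ : ℝ≥0∞)
      ≤ (∑' n : ℕ, opDiag e (S ∘L S) (n+N))^((1:ℝ)/2)
        * ((‖C‖₊:ℝ≥0∞)^2 * ∑' m, opDiag e (S ∘L S) m)^((1:ℝ)/2) := by
  have step1 : ∑' n : ℕ, (‖⟪e (n+N), (S ∘L S) (C (e (n+N)))⟫_ℂ‖₊ : ℝ≥0∞)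
      ≤ ∑' n : ℕ, (‖S (e (n+N))‖₊:ℝ≥0∞) * (‖S (C (e (n+N)))‖₊:ℝ≥0∞) := by
    refine ENNReal.tsum_le_tsum fun n => ?_
    rw [aux_inner_sq hS]
    exact_mod_cast nnnorm_inner_le_nnnorm (𝕜 := ℂ) _ _
  refine step1.trans ((aux_cs _ _).trans ?_)
  refine mul_le_mul' ?_ ?_
  · refine ENNReal.rpow_le_rpow (le_of_eq ?_) (by norm_num)
    exact tsum_congr fun n => (aux_opDiag_sq e hS (n+N)).symm
  · refine ENNReal.rpow_le_rpow ?_ (by norm_num)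
    calc ∑' n : ℕ, ((‖S (C (e (n+N)))‖₊:ℝ≥0∞))^2
        ≤ ∑' n : ℕ, ((‖S (C (e n))‖₊:ℝ≥0∞))^2 :=
          ENNReal.tsum_comp_le_tsum_of_injective (add_left_injective N) _
      _ ≤ (‖C‖₊:ℝ≥0∞)^2 * ∑' m, ((‖S (e m)‖₊:ℝ≥0∞))^2 := aux_SC_sum e hS C
      _ = (‖C‖₊:ℝ≥0∞)^2 * ∑' m, opDiag e (S ∘L S) m := by
          congr 1
          exact tsum_congr fun m => (aux_opDiag_sq e hS m).symm

lemma aux_energy_tail (e : HilbertBasis ℕ ℂ H) (En : ℕ → ℝ) (hEn0 : ∀ n, 0 ≤ En n)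
    (hEnmono : Monotone En) {S : H →L[ℂ] H} (hS : IsSelfAdjoint S) {E : ℝ}
    (hE' : ∑' n : ℕ, ENNReal.ofReal (En n * RCLike.re ⟪e n, (S ∘L S) (e n)⟫_ℂ) ≤ ENNReal.ofReal E)
    (N : ℕ) (hN : 0 < En N) :
    ∑' n : ℕ, opDiag e (S ∘L S) (n+N) ≤ ENNReal.ofReal E / ENNReal.ofReal (En N) := by
  rw [ENNReal.le_div_iff_mul_le (Or.inl (by simp [ENNReal.ofReal_eq_zero]; linarith))
    (Or.inl ENNReal.ofReal_ne_top)]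
  calc (∑' n : ℕ, opDiag e (S ∘L S) (n+N)) * ENNReal.ofReal (En N)
      = ∑' n : ℕ, ENNReal.ofReal (En N) * opDiag e (S ∘L S) (n+N) := by
        rw [ENNReal.tsum_mul_left, mul_comm]
    _ ≤ ∑' n : ℕ, ENNReal.ofReal (En (n+N) * RCLike.re ⟪e (n+N), (S ∘L S) (e (n+N))⟫_ℂ) := by
        refine ENNReal.tsum_le_tsum fun n => ?_
        rw [← aux_opDiag_re e hS, ← ENNReal.ofReal_mul (hEn0 N)]
        refine ENNReal.ofReal_le_ofReal ?_
        exact mul_le_mul_of_nonneg_right (hEnmono (Nat.le_add_left N n)) (aux_re_diag_nonneg hS _)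
    _ ≤ ∑' n : ℕ, ENNReal.ofReal (En n * RCLike.re ⟪e n, (S ∘L S) (e n)⟫_ℂ) :=
        ENNReal.tsum_comp_le_tsum_of_injective (add_left_injective N) _
    _ ≤ ENNReal.ofReal E := hE'

lemma aux_entry_le_hs (e : HilbertBasis ℕ ℂ H) (D : H →L[ℂ] H) (m n : ℕ) :
    (‖⟪e m, D (e n)⟫_ℂ‖₊ : ℝ≥0∞)^2 ≤ hsNormSq e D :=
  ENNReal.le_tsum (m, n)

lemma aux_col_le_hs (e : HilbertBasis ℕ ℂ H) (D : H →L[ℂ] H) (n : ℕ) :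
    ((‖D (e n)‖₊:ℝ≥0∞))^2 ≤ hsNormSq e D := by
  rw [← aux_parseval e (D (e n))]
  exact ENNReal.tsum_comp_le_tsum_of_injective
    (f := fun m => ((m, n) : ℕ × ℕ)) (fun a b h => by
      have : (⟨a, n⟩ : ℕ × ℕ) = ⟨b, n⟩ := h
      exact congrArg Prod.fst this) _

lemma aux_sq_le_one {x : ℝ≥0∞} (h : x^2 ≤ 1) : x ≤ 1 := by
  by_contra hc
  push_neg at hc
  exact absurd h (not_le.mpr (one_lt_pow₀ hc (by norm_num)))

lemma aux_le_sqrt {x y : ℝ≥0∞} (h : x^2 ≤ y) : x ≤ y^((1:ℝ)/2) := by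
  have := ENNReal.rpow_le_rpow h (by norm_num : (0:ℝ) ≤ 1/2)
  rwa [← aux_rpow2, ← ENNReal.rpow_mul, show (2:ℝ)*(1/2) = 1 by norm_num,
    ENNReal.rpow_one] at this


lemma aux_ennreal_split (f : ℕ → ℝ≥0∞) (k : ℕ) :
    ∑' n, f n = (∑ n ∈ Finset.range k, f n) + ∑' n, f (n+k) :=
  (HasSum.sum_range_add (ENNReal.summable.hasSum (f := fun n => f (n+k)))).tsum_eq

set_option maxHeartbeats 1000000 in
/-- for a *bounded* operator `C`, trace constraints are preserved exactly
in the Hilbert–Schmidt limit.  If positive trace-class operators `A i` with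
`Tr(A i · H₀) ≤ E` converge in Hilbert–Schmidt norm to a positive trace-class `Ā`
with `Tr(Ā H₀) ≤ E`, and `Tr(A i · C) = c` for every `i`, then `Tr(Ā C) = c`. -/
theorem trace_constraint_preserved_in_limit
    (e : HilbertBasis ℕ ℂ H) (En : ℕ → ℝ)
    (hEn0 : ∀ n, 0 ≤ En n) (hEnmono : Monotone En) (hEntop : Tendsto En atTop atTop)
    (E : ℝ) (hE : 0 < E)
    (A : ℕ → H →L[ℂ] H) (Abar : H →L[ℂ] H) (C : H →L[ℂ] H) (c : ℂ)
    (hApos : ∀ i, (A i).IsPositive) (hAtc : ∀ i, IsTraceClass e (A i))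
    (hAE : ∀ i, energyTrace e En (A i) ≤ ENNReal.ofReal E)
    (hAbarpos : Abar.IsPositive) (hAbartc : IsTraceClass e Abar)
    (hAbarE : energyTrace e En Abar ≤ ENNReal.ofReal E)
    (hlim : HSTendsto e A Abar)
    (hconstraint : ∀ i, traceC e (A i ∘L C) = c) :
    traceC e (Abar ∘L C) = c := by
  classical
  obtain ⟨Sb, hSb, hTb⟩ := aux_sqrt_exists hAbarpos
  choose S hSsa hTS using fun i => aux_sqrt_exists (hApos i)
  obtain ⟨N₀, hN₀⟩ := eventually_atTop.mp (hEntop.eventually_ge_atTop 1)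
  have hEnN₀ : (0:ℝ) < En N₀ := lt_of_lt_of_le one_pos (hN₀ N₀ le_rfl)
  set K : ℝ≥0∞ := (∑ n ∈ Finset.range N₀, (opDiag e Abar n + 1))
      + ENNReal.ofReal E / ENNReal.ofReal (En N₀) with hK
  have hKfin : K ≠ ⊤ := by
    rw [hK]
    refine ENNReal.add_ne_top.mpr ⟨?_, ?_⟩
    · refine (ENNReal.sum_lt_top.mpr fun n _ => ?_).ne
      exact ENNReal.add_lt_top.mpr ⟨ENNReal.coe_lt_top, ENNReal.one_lt_top⟩
    · exact (ENNReal.div_lt_top ENNReal.ofReal_ne_top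
        (by simp [ENNReal.ofReal_eq_zero]; linarith)).ne
  -- uniform trace bound
  have traceBound : ∀ T SS : H →L[ℂ] H, IsSelfAdjoint SS → T = SS ∘L SS →
      (∀ n, opDiag e T n ≤ opDiag e Abar n + 1) →
      energyTrace e En T ≤ ENNReal.ofReal E →
      ∑' n, opDiag e T n ≤ K := by
    intro T SS hsa hT hd hEn
    subst hT
    rw [aux_ennreal_split (opDiag e (SS ∘L SS)) N₀]
    refine add_le_add (Finset.sum_le_sum fun n _ => hd n) ?_
    exact aux_energy_tail e En hEn0 hEnmono hsa hEn N₀ hEnN₀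
  have hTrAbar : ∑' n, opDiag e Abar n ≤ K :=
    traceBound Abar Sb hSb hTb (fun n => le_self_add) hAbarE
  -- full sum bound and summability
  have fullBound : ∀ T SS : H →L[ℂ] H, IsSelfAdjoint SS → T = SS ∘L SS →
      (∑' n, opDiag e T n ≤ K) →
      ∑' n : ℕ, (‖⟪e n, T (C (e n))⟫_ℂ‖₊ : ℝ≥0∞)
        ≤ K^((1:ℝ)/2) * ((‖C‖₊:ℝ≥0∞)^2 * K)^((1:ℝ)/2) := by
    intro T SS hsa hT hTr
    subst hT
    have h0 := aux_tail_main e hsa C 0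
    simp only [Nat.add_zero] at h0
    refine h0.trans (mul_le_mul' ?_ ?_)
    · exact ENNReal.rpow_le_rpow hTr (by norm_num)
    · exact ENNReal.rpow_le_rpow (mul_le_mul' le_rfl hTr) (by norm_num)
  have hBfin : K^((1:ℝ)/2) * ((‖C‖₊:ℝ≥0∞)^2 * K)^((1:ℝ)/2) ≠ ⊤ := by
    refine ENNReal.mul_ne_top ?_ ?_
    · exact ENNReal.rpow_ne_top_of_nonneg (by norm_num) hKfin
    · exact ENNReal.rpow_ne_top_of_nonneg (by norm_num)
        (ENNReal.mul_ne_top (by simp) hKfin)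
  have hsummable : ∀ T SS : H →L[ℂ] H, IsSelfAdjoint SS → T = SS ∘L SS →
      (∑' n, opDiag e T n ≤ K) →
      Summable (fun n => ⟪e n, (T ∘L C) (e n)⟫_ℂ) ∧
      ∑' n : ℕ, (‖⟪e n, (T ∘L C) (e n)⟫_ℂ‖₊ : ℝ≥0∞) ≠ ⊤ := by
    intro T SS hsa hT hTr
    have hb := fullBound T SS hsa hT hTr
    have hne : ∑' n : ℕ, (‖⟪e n, (T ∘L C) (e n)⟫_ℂ‖₊ : ℝ≥0∞) ≠ ⊤ := by
      refine ne_top_of_le_ne_top hBfin ?_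
      simpa [ContinuousLinearMap.comp_apply] using hb
    refine ⟨?_, hne⟩
    exact Summable.of_nnnorm (ENNReal.tsum_coe_ne_top_iff_summable.mp hne)
  -- epsilon argument
  have key : ∀ ε : ℝ, 0 < ε → ‖traceC e (Abar ∘L C) - c‖ ≤ ε := by
    intro ε hε
    set β := ((‖C‖₊:ℝ≥0∞)^2 * K)^((1:ℝ)/2) with hβ
    have hβfin : β ≠ ⊤ :=
      ENNReal.rpow_ne_top_of_nonneg (by norm_num) (ENNReal.mul_ne_top (by simp) hKfin)
    set r := β.toReal + 1 with hr
    have hr0 : (0:ℝ) < r := by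
      have := ENNReal.toReal_nonneg (a := β); rw [hr]; linarith
    have hβr : β ≤ ENNReal.ofReal r := by
      rw [hr]
      calc β = ENNReal.ofReal β.toReal := (ENNReal.ofReal_toReal hβfin).symm
        _ ≤ _ := ENNReal.ofReal_le_ofReal (by linarith)
    set δ := ε/(4*r) with hδ
    have hδ0 : (0:ℝ) < δ := by rw [hδ]; positivity
    obtain ⟨N, hNboth⟩ := eventually_atTop.mp
      ((hEntop.eventually_ge_atTop (E/(δ^2))).and (eventually_ge_atTop N₀))
    have hNN₀ : N₀ ≤ N := (hNboth N le_rfl).2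
    have hNE : E/(δ^2) ≤ En N := (hNboth N le_rfl).1
    have hEnN1 : (1:ℝ) ≤ En N := hN₀ N hNN₀
    have hEnN0 : (0:ℝ) < En N := lt_of_lt_of_le one_pos hEnN1
    -- per-operator tail bound
    have tailB : ∀ T SS : H →L[ℂ] H, IsSelfAdjoint SS → T = SS ∘L SS →
        energyTrace e En T ≤ ENNReal.ofReal E →
        (∑' n, opDiag e T n ≤ K) →
        ∑' n : ℕ, (‖⟪e (n+N), T (C (e (n+N)))⟫_ℂ‖₊ : ℝ≥0∞) ≤ ENNReal.ofReal (ε/4) := by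
      intro T SS hsa hT hEnT hTr
      subst hT
      have h1 := aux_tail_main e hsa C N
      have h2 : (∑' n : ℕ, opDiag e (SS ∘L SS) (n+N))^((1:ℝ)/2)
          * ((‖C‖₊:ℝ≥0∞)^2 * ∑' m, opDiag e (SS ∘L SS) m)^((1:ℝ)/2)
          ≤ (ENNReal.ofReal E / ENNReal.ofReal (En N))^((1:ℝ)/2) * β := by
        refine mul_le_mul' ?_ ?_
        · exact ENNReal.rpow_le_rpow
            (aux_energy_tail e En hEn0 hEnmono hsa hEnT N hEnN0) (by norm_num)
        · exact ENNReal.rpow_le_rpow (mul_le_mul' le_rfl hTr) (by norm_num)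
      have h3 : ENNReal.ofReal E / ENNReal.ofReal (En N) ≤ ENNReal.ofReal (δ^2) := by
        refine ENNReal.div_le_of_le_mul ?_
        rw [← ENNReal.ofReal_mul (by positivity)]
        refine ENNReal.ofReal_le_ofReal ?_
        calc E = (E/(δ^2)) * δ^2 := by field_simp
          _ ≤ En N * δ^2 := by nlinarith [sq_nonneg δ]
          _ = δ^2 * En N := by ring
      have h4 : (ENNReal.ofReal E / ENNReal.ofReal (En N))^((1:ℝ)/2) * β
          ≤ ENNReal.ofReal (ε/4) := by
        calc (ENNReal.ofReal E / ENNReal.ofReal (En N))^((1:ℝ)/2) * β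
            ≤ (ENNReal.ofReal (δ^2))^((1:ℝ)/2) * ENNReal.ofReal r :=
              mul_le_mul' (ENNReal.rpow_le_rpow h3 (by norm_num)) hβr
          _ = ENNReal.ofReal δ * ENNReal.ofReal r := by
              rw [aux_sqrt_ofReal_sq δ hδ0.le]
          _ = ENNReal.ofReal (δ * r) := (ENNReal.ofReal_mul hδ0.le).symm
          _ = ENNReal.ofReal (ε/4) := by
              rw [hδ]; congr 1; field_simp
      exact h1.trans (h2.trans h4)
    -- head threshold
    set θr := ε/(2*(N+1)*(‖C‖+1)) with hθr
    have hθr0 : (0:ℝ) < θr := by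
      rw [hθr]
      have : (0:ℝ) < ‖C‖+1 := by positivity
      positivity
    have hev : ∀ᶠ i in atTop,
        hsNormSq e (A i - Abar) < min (ENNReal.ofReal (θr^2)) 1 := by
      refine hlim.eventually_lt_const ?_
      exact lt_min (ENNReal.ofReal_pos.mpr (by positivity)) zero_lt_one
    obtain ⟨i, hi⟩ := hev.exists
    have hhs1 : hsNormSq e (A i - Abar) ≤ 1 := (hi.trans_le (min_le_right _ _)).le
    have hhsθ : hsNormSq e (A i - Abar) ≤ ENNReal.ofReal (θr^2) :=
      (hi.trans_le (min_le_left _ _)).le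
    have hDsa : IsSelfAdjoint (A i - Abar) :=
      ((hApos i).isSelfAdjoint).sub hAbarpos.isSelfAdjoint
    -- opDiag comparison
    have hdiagle : ∀ n, opDiag e (A i) n ≤ opDiag e Abar n + 1 := by
      intro n
      have h1 : (A i) (e n) = Abar (e n) + (A i - Abar) (e n) := by simp
      have h2 : ⟪e n, (A i) (e n)⟫_ℂ = ⟪e n, Abar (e n)⟫_ℂ + ⟪e n, (A i - Abar) (e n)⟫_ℂ := by
        rw [h1, inner_add_right]
      have h3 : (‖⟪e n, (A i - Abar) (e n)⟫_ℂ‖₊ : ℝ≥0∞) ≤ 1 :=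
        aux_sq_le_one ((aux_entry_le_hs e _ n n).trans hhs1)
      calc opDiag e (A i) n
          = (‖⟪e n, Abar (e n)⟫_ℂ + ⟪e n, (A i - Abar) (e n)⟫_ℂ‖₊ : ℝ≥0∞) := by
            rw [opDiag, h2]
        _ ≤ (‖⟪e n, Abar (e n)⟫_ℂ‖₊ : ℝ≥0∞) + ‖⟪e n, (A i - Abar) (e n)⟫_ℂ‖₊ := by
            exact_mod_cast nnnorm_add_le _ _
        _ ≤ opDiag e Abar n + 1 := add_le_add le_rfl h3
    have hTrAi : ∑' n, opDiag e (A i) n ≤ K :=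
      traceBound (A i) (S i) (hSsa i) (hTS i) hdiagle (hAE i)
    -- summabilities
    obtain ⟨hsumAbar, hfinAbar⟩ := hsummable Abar Sb hSb hTb hTrAbar
    obtain ⟨hsumAi, hfinAi⟩ := hsummable (A i) (S i) (hSsa i) (hTS i) hTrAi
    set g : ℕ → ℂ := fun n => ⟪e n, ((A i) ∘L C) (e n)⟫_ℂ with hg
    set gb : ℕ → ℂ := fun n => ⟪e n, (Abar ∘L C) (e n)⟫_ℂ with hgb
    have hceq : ∑' n, g n = c := hconstraint i
    have hxeq : traceC e (Abar ∘L C) = ∑' n, gb n := rfl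
    have hdiffsum : traceC e (Abar ∘L C) - c = ∑' n, (gb n - g n) := by
      rw [hxeq, ← hceq, Summable.tsum_sub hsumAbar hsumAi]
    -- the ℝ≥0∞ estimate
    have hfindiff : ∑' n : ℕ, (‖gb n - g n‖₊ : ℝ≥0∞) ≠ ⊤ := by
      refine ne_top_of_le_ne_top (ENNReal.add_ne_top.mpr ⟨hfinAbar, hfinAi⟩) ?_
      rw [← ENNReal.tsum_add]
      refine ENNReal.tsum_le_tsum fun n => ?_
      exact_mod_cast nnnorm_sub_le _ _
    have hsumdiffnn : Summable (fun n => ‖gb n - g n‖₊) :=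
      ENNReal.tsum_coe_ne_top_iff_summable.mp hfindiff
    have hstep1 : (‖∑' n, (gb n - g n)‖₊ : ℝ≥0∞) ≤ ∑' n, (‖gb n - g n‖₊ : ℝ≥0∞) := by
      rw [← ENNReal.coe_tsum hsumdiffnn]
      exact_mod_cast nnnorm_tsum_le hsumdiffnn
    have hsplit : ∑' n : ℕ, (‖gb n - g n‖₊ : ℝ≥0∞)
        = (∑ n ∈ Finset.range N, (‖gb n - g n‖₊ : ℝ≥0∞))
          + ∑' n : ℕ, (‖gb (n+N) - g (n+N)‖₊ : ℝ≥0∞) :=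
      aux_ennreal_split _ N
    -- head bound
    have hDcol : ∀ n, (‖(A i - Abar) (e n)‖₊ : ℝ≥0∞) ≤ ENNReal.ofReal θr := by
      intro n
      have := aux_le_sqrt ((aux_col_le_hs e (A i - Abar) n).trans hhsθ)
      rwa [aux_sqrt_ofReal_sq θr hθr0.le] at this
    have hhead : ∀ n, (‖gb n - g n‖₊ : ℝ≥0∞) ≤ ENNReal.ofReal (ε/(2*(N+1))) := by
      intro n
      have h1 : gb n - g n = -⟪e n, (A i - Abar) (C (e n))⟫_ℂ := by
        simp only [hg, hgb, ContinuousLinearMap.comp_apply, ContinuousLinearMap.sub_apply,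
          inner_sub_right]
        ring
      have h2 : (‖gb n - g n‖₊ : ℝ≥0∞) = ‖⟪(A i - Abar) (e n), C (e n)⟫_ℂ‖₊ := by
        rw [h1, nnnorm_neg, aux_sa_move hDsa]
      have h3 : (‖C (e n)‖₊ : ℝ≥0∞) ≤ ENNReal.ofReal (‖C‖+1) := by
        have h4 : ‖C (e n)‖ ≤ ‖C‖ * ‖e n‖ := C.le_opNorm _
        have h5 : ‖e n‖ = 1 := e.orthonormal.1 n
        rw [← enorm_eq_nnnorm, ← ofReal_norm]
        refine ENNReal.ofReal_le_ofReal ?_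
        rw [h5] at h4; linarith
      calc (‖gb n - g n‖₊ : ℝ≥0∞)
          = (‖⟪(A i - Abar) (e n), C (e n)⟫_ℂ‖₊ : ℝ≥0∞) := h2
        _ ≤ (‖(A i - Abar) (e n)‖₊ : ℝ≥0∞) * ‖C (e n)‖₊ := by
            exact_mod_cast nnnorm_inner_le_nnnorm (𝕜 := ℂ) _ _
        _ ≤ ENNReal.ofReal θr * ENNReal.ofReal (‖C‖+1) := mul_le_mul' (hDcol n) h3
        _ = ENNReal.ofReal (θr * (‖C‖+1)) := (ENNReal.ofReal_mul hθr0.le).symm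
        _ = ENNReal.ofReal (ε/(2*(N+1))) := by
            rw [hθr]; congr 1
            have hC1 : (0:ℝ) < ‖C‖+1 := by positivity
            field_simp
    have hheadsum : (∑ n ∈ Finset.range N, (‖gb n - g n‖₊ : ℝ≥0∞))
        ≤ ENNReal.ofReal (ε/2) := by
      calc (∑ n ∈ Finset.range N, (‖gb n - g n‖₊ : ℝ≥0∞))
          ≤ ∑ _n ∈ Finset.range N, ENNReal.ofReal (ε/(2*(N+1))) :=
            Finset.sum_le_sum fun n _ => hhead n
        _ = (N : ℝ≥0∞) * ENNReal.ofReal (ε/(2*(N+1))) := by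
            rw [Finset.sum_const, Finset.card_range, nsmul_eq_mul]
        _ = ENNReal.ofReal ((N:ℝ) * (ε/(2*(N+1)))) := by
            rw [ENNReal.ofReal_mul (by positivity), ENNReal.ofReal_natCast]
        _ ≤ ENNReal.ofReal (ε/2) := by
            refine ENNReal.ofReal_le_ofReal ?_
            have h : (N:ℝ) ≤ (N:ℝ)+1 := by linarith
            calc (N:ℝ) * (ε/(2*((N:ℝ)+1)))
                ≤ ((N:ℝ)+1) * (ε/(2*((N:ℝ)+1))) :=
                  mul_le_mul_of_nonneg_right h (by positivity)
              _ = ε/2 := by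
                  have hN1 : (0:ℝ) < (N:ℝ)+1 := by positivity
                  field_simp
    -- tail bound
    have htail : ∑' n : ℕ, (‖gb (n+N) - g (n+N)‖₊ : ℝ≥0∞)
        ≤ ENNReal.ofReal (ε/4) + ENNReal.ofReal (ε/4) := by
      have hterm : ∀ n : ℕ, (‖gb (n+N) - g (n+N)‖₊ : ℝ≥0∞)
          ≤ (‖gb (n+N)‖₊ : ℝ≥0∞) + (‖g (n+N)‖₊ : ℝ≥0∞) :=
        fun n => by exact_mod_cast nnnorm_sub_le _ _
      calc ∑' n : ℕ, (‖gb (n+N) - g (n+N)‖₊ : ℝ≥0∞)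
          ≤ ∑' n : ℕ, ((‖gb (n+N)‖₊ : ℝ≥0∞) + (‖g (n+N)‖₊ : ℝ≥0∞)) :=
            ENNReal.tsum_le_tsum hterm
        _ = (∑' n : ℕ, (‖gb (n+N)‖₊ : ℝ≥0∞)) + ∑' n : ℕ, (‖g (n+N)‖₊ : ℝ≥0∞) :=
            ENNReal.tsum_add
        _ ≤ ENNReal.ofReal (ε/4) + ENNReal.ofReal (ε/4) := by
            refine add_le_add ?_ ?_
            · have := tailB Abar Sb hSb hTb hAbarE hTrAbar
              simpa [hgb, ContinuousLinearMap.comp_apply] using this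
            · have := tailB (A i) (S i) (hSsa i) (hTS i) (hAE i) hTrAi
              simpa [hg, ContinuousLinearMap.comp_apply] using this
    have htotal : (‖traceC e (Abar ∘L C) - c‖₊ : ℝ≥0∞) ≤ ENNReal.ofReal ε := by
      rw [hdiffsum]
      calc (‖∑' n, (gb n - g n)‖₊ : ℝ≥0∞)
          ≤ ∑' n, (‖gb n - g n‖₊:ℝ≥0∞) := hstep1
        _ = (∑ n ∈ Finset.range N, (‖gb n - g n‖₊ : ℝ≥0∞))
            + ∑' n : ℕ, (‖gb (n+N) - g (n+N)‖₊ : ℝ≥0∞) := hsplit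
        _ ≤ ENNReal.ofReal (ε/2) + (ENNReal.ofReal (ε/4) + ENNReal.ofReal (ε/4)) :=
            add_le_add hheadsum htail
        _ = ENNReal.ofReal ε := by
            rw [← ENNReal.ofReal_add (by positivity) (by positivity),
              ← ENNReal.ofReal_add (by positivity) (by positivity)]
            ring_nf
    rw [← enorm_eq_nnnorm, ← ofReal_norm] at htotal
    exact (ENNReal.ofReal_le_ofReal_iff hε.le).mp htotal
  by_contra hne
  have h0 : 0 < ‖traceC e (Abar ∘L C) - c‖ := by
    rw [norm_pos_iff, sub_ne_zero]; exact hne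
  have := key (‖traceC e (Abar ∘L C) - c‖/2) (by linarith)
  linarith
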